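/- arXiv:1401.5736 — 2 statements merged into one kernel-verified Lean document; each statement's English description precedes it below -/
import Mathlib

section
/- For any integers r and s with r ≥ 1 and s ≥ 0, there exists a matrix M in SL(2,ℤ) such that the Smith normal form of M - I has diagonal entries (elementary divisors) r and r·s. -/
theorem stmt_2 (r s : ℤ) (hr : 1 ≤ r) (hs : 0 ≤ s) :
    ∃ M P Q : Matrix (Fin 2) (Fin 2) ℤ,
      M.det = 1 ∧ IsUnit P.det ∧ IsUnit Q.det ∧
      P * (M - 1) * Q = Matrix.diagonal ![r, r * s] := by
  refine ⟨!![1, -r; r*s, 1 - r^2*s], !![1, 0; -(r*s), 1], !![0, 1; -1, 0], ?_, ?_, ?_, ?_⟩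
  · simp [Matrix.det_fin_two_of]; ring
  · simp [Matrix.det_fin_two_of]
  · simp [Matrix.det_fin_two_of]
  · ext i j
    fin_cases i <;> fin_cases j <;>
      simp [Matrix.mul_apply, Matrix.vecMul, dotProduct, Fin.sum_univ_succ, Matrix.one_apply, Matrix.diagonal, Matrix.sub_apply] <;> ring_nf <;> decide
end

section
/- In any sequence of n independent fair coin flips, let R_n denote the length of the longest run of heads. Then for every ε > 0, the probability that R_n ≥ (1+ε) log₂ n tends to 0 as n → ∞. (Upper bound half of the Erdős–Rényi law of long runs.) -/
/-- `hasHeadsRun n f k` : the sequence of coin flips `f` (where `true` = heads)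
contains a run of at least `k` consecutive heads. -/
def hasHeadsRun (n : ℕ) (f : Fin n → Bool) (k : ℕ) : Prop :=
  ∃ i, ∃ h : i + k ≤ n, ∀ j : Fin k, f ⟨i + j, by omega⟩ = true

noncomputable def runEnc (n k : ℕ) :
    {f : Fin n → Bool // hasHeadsRun n f k} → Fin (n + 1) × (Fin (n - k) → Bool) :=
  fun ⟨f, hf⟩ =>
    let i := hf.choose
    have hi : i + k ≤ n := hf.choose_spec.choose
    (⟨i, by omega⟩, fun j => if (j : ℕ) < i then f ⟨j, by omega⟩ else f ⟨(j : ℕ) + k, by omega⟩)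

lemma run_pointwise {n k : ℕ} {f : Fin n → Bool} (hf : hasHeadsRun n f k) :
    ∀ m (hm : m < n), hf.choose ≤ m → m < hf.choose + k → f ⟨m, hm⟩ = true := by
  intro m hm h1 h2
  have hi : hf.choose + k ≤ n := hf.choose_spec.choose
  have := hf.choose_spec.choose_spec ⟨m - hf.choose, by omega⟩
  rw [show (⟨m, hm⟩ : Fin n)
      = ⟨hf.choose + ((⟨m - hf.choose, by omega⟩ : Fin k) : ℕ), by simp; omega⟩
    from Fin.ext (by simp; omega)]
  exact this

lemma runEnc_inj (n k : ℕ) : Function.Injective (runEnc n k) := by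
  rintro ⟨f, hf⟩ ⟨g, hg⟩ h
  have h1 : hf.choose = hg.choose := congrArg (fun p => ((Prod.fst p : Fin (n+1)) : ℕ)) h
  have h2 := congrArg Prod.snd h
  simp only [runEnc] at h2
  have hi : hf.choose + k ≤ n := hf.choose_spec.choose
  apply Subtype.ext
  funext x
  rcases lt_or_ge (x : ℕ) hf.choose with hx | hx
  · have hx2 : (x : ℕ) < n - k := by omega
    have := congrFun h2 ⟨x, hx2⟩
    rw [if_pos (show ((⟨x, hx2⟩ : Fin (n-k)) : ℕ) < hf.choose from hx),
        if_pos (show ((⟨x, hx2⟩ : Fin (n-k)) : ℕ) < hg.choose from h1 ▸ hx)] at this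
    simpa using this
  · rcases lt_or_ge (x : ℕ) (hf.choose + k) with hx3 | hx3
    · show f x = g x
      exact (run_pointwise hf x x.isLt hx hx3).trans
        (run_pointwise hg x x.isLt (h1 ▸ hx) (h1 ▸ hx3)).symm
    · have hx2 : (x : ℕ) - k < n - k := by omega
      have := congrFun h2 ⟨(x : ℕ) - k, hx2⟩
      rw [if_neg (show ¬((⟨(x:ℕ) - k, hx2⟩ : Fin (n-k)) : ℕ) < hf.choose by simp; omega),
        if_neg (show ¬((⟨(x:ℕ) - k, hx2⟩ : Fin (n-k)) : ℕ) < hg.choose by simp [← h1]; omega)] at this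
      have hxe : ∀ hh, (⟨(x:ℕ) - k + k, hh⟩ : Fin n) = x := fun hh => Fin.ext (by simp; omega)
      simpa [hxe] using this

lemma card_run_le (n k : ℕ) :
    Nat.card {f : Fin n → Bool // hasHeadsRun n f k} ≤ (n + 1) * 2 ^ (n - k) := by
  have h := Nat.card_le_card_of_injective _ (runEnc_inj n k)
  simpa [Nat.card_eq_fintype_card] using h

theorem stmt_11 (ε : ℝ) (hε : 0 < ε) :
    Filter.Tendsto
      (fun n : ℕ =>
        (Nat.card {f : Fin n → Bool // hasHeadsRun n f ⌈(1 + ε) * Real.logb 2 n⌉₊} : ℝ)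
          / 2 ^ n)
      Filter.atTop (nhds 0) := by
  have htends : Filter.Tendsto (fun n : ℕ => 2 * (n : ℝ) ^ (-ε)) Filter.atTop (nhds 0) := by
    have h := ((tendsto_rpow_neg_atTop hε).comp tendsto_natCast_atTop_atTop).const_mul (2:ℝ)
    simpa using h
  apply squeeze_zero' ?_ ?_ htends
  · filter_upwards with n
    positivity
  · filter_upwards [Filter.eventually_ge_atTop 2] with n hn
    have hn0 : (0:ℝ) < n := by positivity
    have hn1 : (1:ℝ) < n := by exact_mod_cast hn
    set k := ⌈(1 + ε) * Real.logb 2 (n:ℝ)⌉₊ with hkdef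
    have hlogpos : 0 < Real.logb 2 (n:ℝ) := Real.logb_pos (by norm_num) hn1
    have hk1 : 1 ≤ k := Nat.one_le_ceil_iff.2 (by positivity)
    have h2k : (n:ℝ) ^ (1 + ε) ≤ (2:ℝ) ^ k := by
      have h1 : (2:ℝ) ^ ((1 + ε) * Real.logb 2 (n:ℝ)) ≤ (2:ℝ) ^ ((k:ℕ):ℝ) :=
        Real.rpow_le_rpow_of_exponent_le (by norm_num) (Nat.le_ceil _)
      rw [Real.rpow_natCast] at h1
      refine le_trans ?_ h1
      rw [mul_comm, Real.rpow_mul (by norm_num : (0:ℝ) ≤ 2),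
        Real.rpow_logb two_pos (by norm_num) hn0]
    rcases le_or_gt k n with hkn | hkn
    · have hcard := card_run_le n k
      have hchain : ((Nat.card {f : Fin n → Bool // hasHeadsRun n f k} : ℝ)) / 2 ^ n
          ≤ ((n:ℝ) + 1) * 2 ^ (n - k) / 2 ^ n := by
        gcongr
        exact_mod_cast hcard
      refine hchain.trans ?_
      have hpow : (2:ℝ) ^ (n - k) = 2 ^ n / 2 ^ k := by
        rw [eq_div_iff (by positivity), ← pow_add]
        congr 1
        omega
      have heq : ((n:ℝ) + 1) * 2 ^ (n - k) / 2 ^ n = ((n:ℝ) + 1) / 2 ^ k := by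
        rw [hpow]
        field_simp
      rw [heq]
      have hdiv : ((n:ℝ) + 1) / 2 ^ k ≤ (2 * n) / (n:ℝ) ^ (1 + ε) :=
        div_le_div₀ (by positivity) (by linarith) (by positivity) h2k
      refine hdiv.trans ?_
      have heq2 : (2:ℝ) * n / (n:ℝ) ^ (1 + ε) = 2 * (n:ℝ) ^ (-ε) := by
        rw [mul_div_assoc, show -ε = 1 - (1 + ε) by ring, Real.rpow_sub hn0, Real.rpow_one]
      exact le_of_eq heq2
    · have hempty : IsEmpty {f : Fin n → Bool // hasHeadsRun n f k} := by
        constructor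
        rintro ⟨f, i, hi, -⟩
        omega
      rw [Nat.card_of_isEmpty]
      simp only [Nat.cast_zero, zero_div]
      positivity
end
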